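/- Let K ⊆ ℝ^d_+ be nonempty with ‖x‖ ≤ R for all x ∈ K, let 0 < α < 1, R > 0, and let O : ℝ^d_+ → K satisfy O(c)·c ≥ α·sup_{x∈K} x·c for every c ∈ ℝ^d_+. Fix c ∈ ℝ^d and set s = O(−c⁻) and v = O(−c⁻) − R·c̄⁺. Then: (1) v·c ≤ α·inf_{x∈K} x·c; (2) v ≤ s coordinatewise, and hence s·f ≥ v·f for every f ∈ ℝ^d_+; (3) ‖v‖ ≤ (α+2)R. -/

import Mathlib

open scoped RealInnerProductSpace

/-- The extended approximation oracle for payoff maximization (α < 1):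
given an α-approximation oracle `O` for linear maximization over `K ⊆ ℝ^d_+`,
the point `v = O(−c⁻) − R·c̄⁺` satisfies the three stated properties. -/
theorem extended_approximation_oracle_max {d : ℕ}
    (K : Set (EuclideanSpace ℝ (Fin d))) (R α : ℝ)
    (hK : K.Nonempty) (hKpos : ∀ x ∈ K, ∀ i, 0 ≤ x i)
    (hKR : ∀ x ∈ K, ‖x‖ ≤ R) (hα0 : 0 < α) (hα1 : α < 1) (hR : 0 < R)
    (O : EuclideanSpace ℝ (Fin d) → EuclideanSpace ℝ (Fin d))
    (hOmem : ∀ c : EuclideanSpace ℝ (Fin d), (∀ i, 0 ≤ c i) → O c ∈ K)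
    (hOapx : ∀ c : EuclideanSpace ℝ (Fin d), (∀ i, 0 ≤ c i) →
      α * ⨆ x : K, ⟪(x : EuclideanSpace ℝ (Fin d)), c⟫ ≤ ⟪O c, c⟫)
    (c cpos cneg : EuclideanSpace ℝ (Fin d))
    (hcpos : ∀ i, cpos i = max (c i) 0)
    (hcneg : ∀ i, cneg i = min (c i) 0)
    (s v : EuclideanSpace ℝ (Fin d))
    (hs : s = O (-cneg))
    (hv : v = O (-cneg) - R • (‖cpos‖⁻¹ • cpos)) :
    ⟪v, c⟫ ≤ α * ⨅ x : K, ⟪(x : EuclideanSpace ℝ (Fin d)), c⟫ ∧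
    (∀ i, v i ≤ s i) ∧
    (∀ f : EuclideanSpace ℝ (Fin d), (∀ i, 0 ≤ f i) → ⟪v, f⟫ ≤ ⟪s, f⟫) ∧
    ‖v‖ ≤ (α + 2) * R := by
  haveI : Nonempty K := hK.to_subtype
  have hcnegpos : ∀ i, 0 ≤ (-cneg) i := by
    intro i
    simp only [PiLp.neg_apply, hcneg]
    simp [le_refl]
  have hsK : s ∈ K := hs ▸ hOmem _ hcnegpos
  have hsR : ‖s‖ ≤ R := hKR _ hsK
  have hcposnn : ∀ i, 0 ≤ cpos i := fun i => by rw [hcpos]; exact le_max_right _ _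
  -- c = cpos + cneg
  have hc : cpos + cneg = c := by
    ext i
    simp only [PiLp.add_apply, hcpos, hcneg]
    rcases le_or_gt 0 (c i) with h | h
    · rw [max_eq_left h, min_eq_right h]; ring
    · rw [max_eq_right h.le, min_eq_left h.le]; ring
  -- inner of nonneg vectors is nonneg
  have innn : ∀ (x y : EuclideanSpace ℝ (Fin d)), (∀ i, 0 ≤ x i) → (∀ i, 0 ≤ y i) →
      (0:ℝ) ≤ ⟪x, y⟫ := by
    intro x y hx hy
    rw [PiLp.inner_apply]
    exact Finset.sum_nonneg fun i _ => by
      simpa using mul_nonneg (hy i) (hx i)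
  -- ⟪cpos, c⟫ = ‖cpos‖^2
  have hpc : ⟪cpos, c⟫ = ‖cpos‖ ^ 2 := by
    rw [← real_inner_self_eq_norm_sq, PiLp.inner_apply, PiLp.inner_apply]
    apply Finset.sum_congr rfl
    intro i _
    simp only [RCLike.inner_apply, conj_trivial, hcpos]
    rcases le_or_gt 0 (c i) with h | h
    · rw [max_eq_left h]
    · rw [max_eq_right h.le]; ring
  have hvs : v = s - R • (‖cpos‖⁻¹ • cpos) := by rw [hv, hs]
  -- key bound: ⟪v,c⟫ ≤ ⟪s, cneg⟫
  have hvc : ⟪v, c⟫ ≤ ⟪s, cneg⟫ := by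
    have hsc : ⟪s, c⟫ = ⟪s, cpos⟫ + ⟪s, cneg⟫ := by rw [← hc, inner_add_right]
    have h1 : ⟪v, c⟫ = ⟪s, cpos⟫ + ⟪s, cneg⟫ - R * (‖cpos‖⁻¹ * ‖cpos‖ ^ 2) := by
      rw [hvs, inner_sub_left, inner_smul_left, inner_smul_left, hpc, hsc]
      simp only [conj_trivial]
    have h2 : ‖cpos‖⁻¹ * ‖cpos‖ ^ 2 = ‖cpos‖ := by
      rcases eq_or_ne ‖cpos‖ 0 with h | h
      · simp [h]
      · field_simp
    have h3 : ⟪s, cpos⟫ ≤ R * ‖cpos‖ :=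
      (real_inner_le_norm s cpos).trans
        (mul_le_mul_of_nonneg_right hsR (norm_nonneg _))
    rw [h1, h2]
    linarith
  -- for every x ∈ K, ⟪s, cneg⟫ ≤ α * ⟪x, cneg⟫ ≤ α * ⟪x, c⟫
  have hkey : ∀ x ∈ K, ⟪v, c⟫ ≤ α * ⟪x, c⟫ := by
    intro x hx
    have hbdd : BddAbove (Set.range fun y : K => ⟪(y : EuclideanSpace ℝ (Fin d)), -cneg⟫) := by
      refine ⟨R * ‖-cneg‖, ?_⟩
      rintro _ ⟨y, rfl⟩
      exact (real_inner_le_norm _ _).trans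
        (mul_le_mul_of_nonneg_right (hKR _ y.2) (norm_nonneg _))
    have h1 : ⟪(x : EuclideanSpace ℝ (Fin d)), -cneg⟫ ≤
        ⨆ y : K, ⟪(y : EuclideanSpace ℝ (Fin d)), -cneg⟫ :=
      le_ciSup hbdd ⟨x, hx⟩
    have h2 := hOapx (-cneg) hcnegpos
    rw [← hs] at h2
    have h3 : α * ⟪(x : EuclideanSpace ℝ (Fin d)), -cneg⟫ ≤ ⟪s, -cneg⟫ :=
      le_trans (mul_le_mul_of_nonneg_left h1 hα0.le) h2
    rw [inner_neg_right, inner_neg_right] at h3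
    have h4 : ⟪s, cneg⟫ ≤ α * ⟪x, cneg⟫ := by linarith
    have h5 : ⟪x, cneg⟫ ≤ ⟪x, c⟫ := by
      rw [← hc, inner_add_right]
      have := innn x cpos (hKpos x hx) hcposnn
      linarith
    calc ⟪v, c⟫ ≤ ⟪s, cneg⟫ := hvc
      _ ≤ α * ⟪x, cneg⟫ := h4
      _ ≤ α * ⟪x, c⟫ := mul_le_mul_of_nonneg_left h5 hα0.le
  refine ⟨?_, ?_, ?_, ?_⟩
  · -- part 1
    have h : ⟪v, c⟫ / α ≤ ⨅ x : K, ⟪(x : EuclideanSpace ℝ (Fin d)), c⟫ :=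
      le_ciInf fun x => (div_le_iff₀ hα0).mpr (by rw [mul_comm]; exact hkey x x.2)
    have := (div_le_iff₀ hα0).mp h
    linarith [this]
  · -- part 2
    intro i
    rw [hvs]
    simp only [PiLp.sub_apply, PiLp.smul_apply, smul_eq_mul]
    have : 0 ≤ R * (‖cpos‖⁻¹ * cpos i) :=
      mul_nonneg hR.le (mul_nonneg (inv_nonneg.mpr (norm_nonneg _)) (hcposnn i))
    linarith
  · -- part 3
    intro f hf
    rw [PiLp.inner_apply, PiLp.inner_apply]
    apply Finset.sum_le_sum
    intro i _
    simp only [RCLike.inner_apply, conj_trivial]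
    apply mul_le_mul_of_nonneg_left _ (hf i)
    rw [hvs]
    simp only [PiLp.sub_apply, PiLp.smul_apply, smul_eq_mul]
    have : 0 ≤ R * (‖cpos‖⁻¹ * cpos i) :=
      mul_nonneg hR.le (mul_nonneg (inv_nonneg.mpr (norm_nonneg _)) (hcposnn i))
    linarith
  · -- part 4
    rw [hvs]
    have h1 : ‖R • (‖cpos‖⁻¹ • cpos)‖ ≤ R := by
      rw [norm_smul, norm_smul, Real.norm_eq_abs, Real.norm_eq_abs,
        abs_of_nonneg hR.le, abs_of_nonneg (inv_nonneg.mpr (norm_nonneg _))]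
      rcases eq_or_ne ‖cpos‖ 0 with h | h
      · simp [h, hR.le]
      · rw [inv_mul_cancel₀ h, mul_one]
    calc ‖s - R • (‖cpos‖⁻¹ • cpos)‖ ≤ ‖s‖ + ‖R • (‖cpos‖⁻¹ • cpos)‖ := norm_sub_le _ _
      _ ≤ R + R := add_le_add hsR h1
      _ ≤ (α + 2) * R := by nlinarith
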